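/- Let p be a prime, k a field of characteristic p, and let A be the subring of the power series ring k⟦t⟧ consisting of those power series Σ_{n≥0} aₙtⁿ with [k^p(a₀,a₁,…) : k^p] < ∞. Then the p-th power of every element of the Laurent series field k((t)) lies in the fraction field K of A (viewed inside k((t))); consequently k((t)) is a purely inseparable field extension of K. -/

import Mathlib

set_option synthInstance.maxHeartbeats 1000000
set_option maxHeartbeats 2000000

variable (k : Type*) [Field k] (p : ℕ) [Fact p.Prime] [CharP k p]

/-- The subfield `k^p` of `p`-th powers of the field `k` (of characteristic `p`). -/
noncomputable def pthPowerSubfield : Subfield k := (frobenius k p).fieldRange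

variable {k p}

lemma isIntegral_pthPowerSubfield (a : k) : IsIntegral ↥(pthPowerSubfield k p) a := by
  refine ⟨Polynomial.X ^ p - Polynomial.C ⟨a ^ p, a, rfl⟩,
    Polynomial.monic_X_pow_sub_C _ (Fact.out : p.Prime).ne_zero, ?_⟩
  simp only [Polynomial.eval₂_sub, Polynomial.eval₂_pow, Polynomial.eval₂_X, Polynomial.eval₂_C]
  exact sub_eq_zero.mpr rfl

variable (k p) in
/-- The field `k^p(a₀, a₁, …)` generated over `k^p` by the coefficients of a power
series `f` is a finite extension of `k^p`. -/
def HasFiniteCoeffField (f : PowerSeries k) : Prop :=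
  FiniteDimensional ↥(pthPowerSubfield k p)
    ↥(IntermediateField.adjoin ↥(pthPowerSubfield k p)
      (Set.range fun n => PowerSeries.coeff (R := k) n f))

lemma hasFiniteCoeffField_of_mem {f : PowerSeries k}
    (E : IntermediateField ↥(pthPowerSubfield k p) k) (hE : FiniteDimensional ↥(pthPowerSubfield k p) E)
    (h : ∀ n, PowerSeries.coeff (R := k) n f ∈ E) : HasFiniteCoeffField k p f := by
  have hle : IntermediateField.adjoin ↥(pthPowerSubfield k p)
      (Set.range fun n => PowerSeries.coeff (R := k) n f) ≤ E := by
    rw [IntermediateField.adjoin_le_iff]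
    rintro x ⟨n, rfl⟩; exact h n
  exact FiniteDimensional.of_injective
    (IntermediateField.inclusion hle).toLinearMap
    (IntermediateField.inclusion_injective hle)

variable (k p) in
/-- The subring `A ⊆ k⟦t⟧` of power series whose coefficients generate a finite
extension of `k^p`. -/
noncomputable def finiteCoeffSubring : Subring (PowerSeries k) where
  carrier := {f | HasFiniteCoeffField k p f}
  zero_mem' := hasFiniteCoeffField_of_mem ⊥ inferInstance (fun n => by
    rw [map_zero]; exact zero_mem ⊥)
  one_mem' := hasFiniteCoeffField_of_mem ⊥ inferInstance (fun n => by
    rw [PowerSeries.coeff_one]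
    split
    · exact one_mem ⊥
    · exact zero_mem ⊥)
  add_mem' := by
    intro f g hf hg
    haveI : FiniteDimensional ↥(pthPowerSubfield k p)
        ↥(IntermediateField.adjoin ↥(pthPowerSubfield k p)
          (Set.range fun n => PowerSeries.coeff (R := k) n f)) := hf
    haveI : FiniteDimensional ↥(pthPowerSubfield k p)
        ↥(IntermediateField.adjoin ↥(pthPowerSubfield k p)
          (Set.range fun n => PowerSeries.coeff (R := k) n g)) := hg
    refine hasFiniteCoeffField_of_mem
      (IntermediateField.adjoin _ (Set.range fun n => PowerSeries.coeff (R := k) n f) ⊔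
        IntermediateField.adjoin _ (Set.range fun n => PowerSeries.coeff (R := k) n g))
      inferInstance fun n => ?_
    rw [map_add]
    exact add_mem
      (le_sup_left (α := IntermediateField _ k) (IntermediateField.subset_adjoin _ _ ⟨n, rfl⟩))
      (le_sup_right (α := IntermediateField _ k) (IntermediateField.subset_adjoin _ _ ⟨n, rfl⟩))
  mul_mem' := by
    intro f g hf hg
    haveI : FiniteDimensional ↥(pthPowerSubfield k p)
        ↥(IntermediateField.adjoin ↥(pthPowerSubfield k p)
          (Set.range fun n => PowerSeries.coeff (R := k) n f)) := hf
    haveI : FiniteDimensional ↥(pthPowerSubfield k p)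
        ↥(IntermediateField.adjoin ↥(pthPowerSubfield k p)
          (Set.range fun n => PowerSeries.coeff (R := k) n g)) := hg
    refine hasFiniteCoeffField_of_mem
      (IntermediateField.adjoin _ (Set.range fun n => PowerSeries.coeff (R := k) n f) ⊔
        IntermediateField.adjoin _ (Set.range fun n => PowerSeries.coeff (R := k) n g))
      inferInstance fun n => ?_
    rw [PowerSeries.coeff_mul]
    refine sum_mem fun c _ => mul_mem
      (le_sup_left (α := IntermediateField _ k) (IntermediateField.subset_adjoin _ _ ⟨c.1, rfl⟩))
      (le_sup_right (α := IntermediateField _ k) (IntermediateField.subset_adjoin _ _ ⟨c.2, rfl⟩))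
  neg_mem' := by
    intro f hf
    haveI : FiniteDimensional ↥(pthPowerSubfield k p)
        ↥(IntermediateField.adjoin ↥(pthPowerSubfield k p)
          (Set.range fun n => PowerSeries.coeff (R := k) n f)) := hf
    refine hasFiniteCoeffField_of_mem
      (IntermediateField.adjoin _ (Set.range fun n => PowerSeries.coeff (R := k) n f))
      inferInstance fun n => ?_
    rw [map_neg]
    exact neg_mem (IntermediateField.subset_adjoin _ _ ⟨n, rfl⟩)



lemma subfield_zpow_mem {F : Type*} [Field F] (S : Subfield F) {x : F}
    (hx : x ∈ S) (n : ℤ) : x ^ n ∈ S := by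
  cases n with
  | ofNat m => rw [Int.ofNat_eq_coe, zpow_natCast]; exact pow_mem hx m
  | negSucc m => rw [zpow_negSucc]; exact S.inv_mem (pow_mem hx (m+1))

lemma coeff_pow_p_mem (f : PowerSeries k) (n : ℕ) :
    ∃ y : k, y ^ p = PowerSeries.coeff (R := k) n (f ^ p) := by
  haveI : CharP (PowerSeries k) p :=
    charP_of_injective_ringHom (PowerSeries.C_injective (R := k)) p
  set g : Polynomial k := PowerSeries.trunc (n+1) f with hg
  have hdvd : (PowerSeries.X : PowerSeries k) ^ (n+1) ∣ (f - (g : PowerSeries k)) := by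
    rw [PowerSeries.X_pow_dvd_iff]
    intro m hm
    simp [hg, PowerSeries.coeff_trunc, Polynomial.coeff_coe, hm]
  have hchar : (f - (g : PowerSeries k)) ^ p = f ^ p - (g : PowerSeries k) ^ p :=
    sub_pow_char ..
  have h2 : PowerSeries.coeff (R := k) n (f ^ p - (g : PowerSeries k) ^ p) = 0 := by
    obtain ⟨h, hh⟩ := hdvd
    rw [← hchar, hh, mul_pow, ← pow_mul]
    have := (PowerSeries.X_pow_dvd_iff (n := (n+1)*p)
      (φ := PowerSeries.X ^ ((n+1)*p) * h ^ p)).mp ⟨h ^ p, rfl⟩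
    exact this n (by nlinarith [(Fact.out : p.Prime).two_le])
  have h3 : PowerSeries.coeff (R := k) n (f ^ p) = PowerSeries.coeff (R := k) n ((g : PowerSeries k) ^ p) := by
    rw [map_sub, sub_eq_zero] at h2; exact h2
  rw [h3, ← Polynomial.coe_pow, Polynomial.coeff_coe, ← Polynomial.map_frobenius_expand,
    Polynomial.coeff_map]
  exact ⟨_, rfl⟩

lemma pow_p_mem_finiteCoeffSubring (f : PowerSeries k) :
    f ^ p ∈ finiteCoeffSubring k p := by
  refine hasFiniteCoeffField_of_mem ⊥ inferInstance fun n => ?_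
  rw [IntermediateField.mem_bot]
  obtain ⟨y, hy⟩ := coeff_pow_p_mem (p := p) f n
  exact ⟨⟨PowerSeries.coeff (R := k) n (f ^ p), y, hy⟩, rfl⟩

lemma X_mem_finiteCoeffSubring : (PowerSeries.X : PowerSeries k) ∈ finiteCoeffSubring k p := by
  refine hasFiniteCoeffField_of_mem ⊥ inferInstance fun n => ?_
  rw [PowerSeries.coeff_X]
  split
  · exact one_mem ⊥
  · exact zero_mem ⊥

/-- Every element of `k((t))` has its `p`-th power in the fraction
field of `A` (the subfield of `k((t))` generated by `A`), where `A ⊆ k⟦t⟧` is the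
subring of power series whose coefficients generate a finite extension of `k^p`.
Consequently `k((t))` is purely inseparable over `Frac(A)`. -/
theorem pow_p_mem_fractionField_finiteCoeffSubring (x : LaurentSeries k) :
    x ^ p ∈ Subfield.closure
      ((HahnSeries.ofPowerSeries ℤ k) '' (finiteCoeffSubring k p : Set (PowerSeries k))) := by
  classical
  by_cases hx : x = 0
  · rw [hx, zero_pow (Fact.out : p.Prime).ne_zero]
    exact zero_mem _
  set S := Subfield.closure
      ((HahnSeries.ofPowerSeries ℤ k) '' (finiteCoeffSubring k p : Set (PowerSeries k))) with hS
  have hX : (HahnSeries.single (1 : ℤ) (1 : k) : LaurentSeries k) ∈ S := by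
    rw [← HahnSeries.ofPowerSeries_X]
    exact Subfield.subset_closure ⟨PowerSeries.X, X_mem_finiteCoeffSubring, rfl⟩
  have hfp : (HahnSeries.ofPowerSeries ℤ k) (x.powerSeriesPart ^ p) ∈ S :=
    Subfield.subset_closure ⟨_, pow_p_mem_finiteCoeffSubring x.powerSeriesPart, rfl⟩
  have key : x = (HahnSeries.single x.order (1 : k) : LaurentSeries k) *
      (HahnSeries.ofPowerSeries ℤ k) x.powerSeriesPart := by
    exact (LaurentSeries.single_order_mul_powerSeriesPart x).symm
  have keyp : x ^ p = ((HahnSeries.single (1 : ℤ) (1 : k) : LaurentSeries k) ^ x.order) ^ p *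
      (HahnSeries.ofPowerSeries ℤ k) (x.powerSeriesPart ^ p) := by
    rw [map_pow, ← RatFunc.single_zpow, ← mul_pow, ← key]
  rw [keyp]
  exact mul_mem (pow_mem (subfield_zpow_mem S hX x.order) p) hfp
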